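/- If an SCC X of G with |X| > 2 has exactly two doors i and j, then no Hamiltonian path of G from s to e (with s, e ∉ X) contains the arc (i, j) or the arc (j, i). -/

import Mathlib

variable {V : Type*}

/-- Reachability in a directed graph given by arc relation `A`. -/
def Reach (A : V → V → Prop) : V → V → Prop := Relation.ReflTransGen A

/-- Two vertices are in the same strongly connected component. -/
def SameSCC (A : V → V → Prop) (u v : V) : Prop := Reach A u v ∧ Reach A v u

/-- The strongly connected component of a vertex. -/
def sccOf (A : V → V → Prop) (v : V) : Set V := {u | SameSCC A v u}

/-- A set is a strongly connected component. -/
def IsSCC (A : V → V → Prop) (X : Set V) : Prop := ∃ v, X = sccOf A v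

/-- Arcs of the reduced graph (condensation): between distinct SCCs joined by an arc of `A`. -/
def CondArc (A : V → V → Prop) (X Y : Set V) : Prop :=
  IsSCC A X ∧ IsSCC A Y ∧ X ≠ Y ∧ ∃ u ∈ X, ∃ v ∈ Y, A u v

/-- A directed graph is acyclic: no arc lies on a directed cycle. -/
def Acyclic (A : V → V → Prop) : Prop := ∀ u v, A u v → ¬ Reach A v u

/-- A Hamiltonian path of the digraph `A`, as a duplicate-free list visiting every vertex. -/
def IsHamList (A : V → V → Prop) (p : List V) : Prop :=
  p.Chain' A ∧ p.Nodup ∧ ∀ v, v ∈ p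

/-- A Hamiltonian path from `s` to `e`. -/
def IsHamPath (A : V → V → Prop) (s e : V) (p : List V) : Prop :=
  IsHamList A p ∧ p.head? = some s ∧ p.getLast? = some e

/-- A Hamiltonian path of the reduced graph: a duplicate-free list of SCCs, chained by
condensation arcs, containing every SCC. -/
def RHamPath (A : V → V → Prop) (P : List (Set V)) : Prop :=
  (∀ X ∈ P, IsSCC A X) ∧ P.Chain' (CondArc A) ∧ P.Nodup ∧ ∀ X, IsSCC A X → X ∈ P

/-- A vertex of an SCC `X` is a door if it has a predecessor or a successor outside `X`. -/
def IsDoor (A : V → V → Prop) (X : Set V) (x : V) : Prop :=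
  (∃ u, u ∉ X ∧ A u x) ∨ (∃ u, u ∉ X ∧ A x u)

private lemma nat_first (Q : ℕ → Prop) :
    ∀ n, ¬ Q 0 → Q n → ∃ m, 0 < m ∧ m ≤ n ∧ Q m ∧ ¬ Q (m - 1) := by
  intro n h0 hn
  induction n with
  | zero => exact absurd hn h0
  | succ k ih =>
    by_cases hk : Q k
    · obtain ⟨m, h1, h2, h3, h4⟩ := ih hk
      exact ⟨m, h1, h2.trans (Nat.le_succ k), h3, h4⟩
    · exact ⟨k + 1, Nat.succ_pos k, le_refl _, hn, by simpa using hk⟩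

private lemma nat_last (Q : ℕ → Prop) (N : ℕ) (hN : ¬ Q N) :
    ∀ k n, N - n ≤ k → n ≤ N → Q n → ∃ m, n ≤ m ∧ m < N ∧ Q m ∧ ¬ Q (m + 1) := by
  intro k
  induction k with
  | zero =>
    intro n hk hn hQ
    have : n = N := by omega
    exact absurd (this ▸ hQ) hN
  | succ k ih =>
    intro n hk hn hQ
    have hnN : n < N := by
      rcases eq_or_lt_of_le hn with h | h
      · exact absurd (h ▸ hQ) hN
      · exact h
    by_cases h1 : Q (n + 1)
    · obtain ⟨m, h2, h3, h4, h5⟩ := ih (n + 1) (by omega) (by omega) h1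
      exact ⟨m, by omega, h3, h4, h5⟩
    · exact ⟨n, le_refl _, hnN, hQ, h1⟩

private lemma key_arc (A : V → V → Prop) (s e : V) (X : Set V)
    (hsX : s ∉ X) (heX : e ∉ X) (i j : V) (hiX : i ∈ X) (hjX : j ∈ X)
    (honly : ∀ x ∈ X, IsDoor A X x → x = i ∨ x = j)
    (x : V) (hxX : x ∈ X) (hxi : x ≠ i) (hxj : x ≠ j)
    (H : List V) (hH : IsHamPath A s e H) : ¬ [i, j] <:+: H := by
  rintro ⟨l, r, hlr0⟩
  obtain ⟨⟨hchain, hnodup, hall⟩, hhead, hlast⟩ := hH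
  have hlr : l ++ i :: j :: r = H := by simpa using hlr0
  set L := l.length with hLdef
  have hHi : H[L]? = some i := by
    rw [← hlr, List.getElem?_append_right (le_refl _)]
    simp
  have hHj : H[L + 1]? = some j := by
    rw [← hlr, List.getElem?_append_right (Nat.le_succ _)]
    simp [Nat.succ_sub (le_refl L)]
  -- chain in option form
  have hA : ∀ m u v, H[m]? = some u → H[m + 1]? = some v → A u v := by
    intro m u v hu hv
    obtain ⟨hm1, hv'⟩ := List.getElem?_eq_some_iff.mp hv
    obtain ⟨hm, hu'⟩ := List.getElem?_eq_some_iff.mp hu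
    have := List.isChain_iff_getElem.mp hchain m (by omega)
    rwa [hu', hv'] at this
  -- the occupancy predicate
  set Q : ℕ → Prop := fun m => ∃ v, v ∈ X ∧ H[m]? = some v with hQdef
  have hQ0 : ¬ Q 0 := by
    rintro ⟨v, hvX, hv⟩
    rw [← List.head?_eq_getElem?, hhead] at hv
    exact hsX (by cases hv; exact hvX)
  have hQN : ¬ Q (H.length - 1) := by
    rintro ⟨v, hvX, hv⟩
    rw [← List.getLast?_eq_getElem?, hlast] at hv
    exact heX (by cases hv; exact hvX)
  obtain ⟨n, hn⟩ : ∃ n, H[n]? = some x := List.mem_iff_getElem?.mp (hall x)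
  have hnlen : n < H.length := (List.getElem?_eq_some_iff.mp hn).1
  have hnL : n ≠ L := by
    intro h; rw [h, hHi] at hn; exact hxi (by cases hn; rfl)
  have hnL1 : n ≠ L + 1 := by
    intro h; rw [h, hHj] at hn; exact hxj (by cases hn; rfl)
  rcases lt_or_gt_of_ne hnL with hlt | hgt
  · -- x before i : find an entrance into X at position m ≤ n < L
    obtain ⟨m, hm0, hmn, ⟨w, hwX, hw⟩, hQm⟩ := nat_first Q n hQ0 ⟨x, hxX, hn⟩
    have hmlen : m < H.length := (List.getElem?_eq_some_iff.mp hw).1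
    have hu : H[m - 1]? = some (H[m - 1]'(by omega)) := List.getElem?_eq_getElem (by omega)
    have huX : H[m - 1]'(by omega) ∉ X := fun h => hQm ⟨_, h, hu⟩
    have hAuw : A (H[m - 1]'(by omega)) w := by
      have := hA (m - 1) _ w hu (by rwa [Nat.sub_add_cancel hm0])
      exact this
    have hdoor : IsDoor A X w := Or.inl ⟨_, huX, hAuw⟩
    rcases honly w hwX hdoor with rfl | rfl
    · have : m = L := (List.getElem?_inj hmlen hnodup).mp (hw.trans hHi.symm)
      omega
    · have : m = L + 1 := (List.getElem?_inj hmlen hnodup).mp (hw.trans hHj.symm)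
      omega
  · -- x after j : find an exit out of X at position m ≥ n > L + 1
    have hgt' : L + 1 < n := by omega
    obtain ⟨m, hnm, hmN, ⟨w, hwX, hw⟩, hQm⟩ :=
      nat_last Q (H.length - 1) hQN (H.length - 1 - n) n (le_refl _) (by omega) ⟨x, hxX, hn⟩
    have hmlen : m < H.length := (List.getElem?_eq_some_iff.mp hw).1
    have hu : H[m + 1]? = some (H[m + 1]'(by omega)) := List.getElem?_eq_getElem (by omega)
    have huX : H[m + 1]'(by omega) ∉ X := fun h => hQm ⟨_, h, hu⟩
    have hAwu : A w (H[m + 1]'(by omega)) := hA m w _ hw hu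
    have hdoor : IsDoor A X w := Or.inr ⟨_, huX, hAwu⟩
    rcases honly w hwX hdoor with rfl | rfl
    · have : m = L := (List.getElem?_inj hmlen hnodup).mp (hw.trans hHi.symm)
      omega
    · have : m = L + 1 := (List.getElem?_inj hmlen hnodup).mp (hw.trans hHj.symm)
      omega

/-- If an SCC `X` with more than two vertices has exactly two doors `i` and `j`, then no
Hamiltonian path of `G` from `s` to `e` (with `s, e ∉ X`) contains arc `(i,j)` or `(j,i)`. -/
theorem two_doors_arcs_infeasible (A : V → V → Prop) (s e : V)
    (X : Set V) (hX : IsSCC A X) (hcard : 2 < X.ncard)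
    (hsX : s ∉ X) (heX : e ∉ X)
    (i j : V) (hij : i ≠ j) (hiX : i ∈ X) (hjX : j ∈ X)
    (hi : IsDoor A X i) (hj : IsDoor A X j)
    (honly : ∀ x ∈ X, IsDoor A X x → x = i ∨ x = j) :
    ∀ H : List V, IsHamPath A s e H → ¬ [i, j] <:+: H ∧ ¬ [j, i] <:+: H := by
  obtain ⟨x, hxX, hxi, hxj⟩ : ∃ x ∈ X, x ≠ i ∧ x ≠ j := by
    by_contra h
    push_neg at h
    have hsub : X ⊆ {i, j} := by
      intro y hy
      rcases eq_or_ne y i with rfl | hyi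
      · exact Set.mem_insert _ _
      · exact (h y hy hyi).symm ▸ Set.mem_insert_iff.mpr (Or.inr rfl)
    have h2 : X.ncard ≤ 2 := by
      have := Set.ncard_le_ncard hsub ((Set.finite_singleton j).insert i)
      rwa [Set.ncard_pair hij] at this
    omega
  intro H hH
  exact ⟨key_arc A s e X hsX heX i j hiX hjX honly x hxX hxi hxj H hH,
    key_arc A s e X hsX heX j i hjX hiX (fun y hy hd => (honly y hy hd).symm) x hxX hxj hxi H hH⟩
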